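/- arXiv:2209.06745 — 3 statements merged into one kernel-verified Lean document; each statement's English description precedes it below -/
import Mathlib

section
/- Let q ∈ ℂ with |q| < 1/3, and let φ(q) = ∑_{n∈ℤ} q^{n²} = 1 + 2∑_{n≥1} q^{n²} be Ramanujan's theta function. Then the family ((−2)^{ℓ(c)} q^{|c|}) indexed by compositions c ∈ C_{P₄} into square parts is summable, φ(q) ≠ 0, and ∑_{c∈C_{P₄}} (−2)^{ℓ(c)} q^{|c|} = 1/φ(q). -/
open Finset

section Aux

variable (f : ℕ → ℂ)

/-- Sum of products over tuples, norm version. -/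
lemma aux_tuple_norm (hf : Summable fun n => ‖f n‖) (k : ℕ) :
    Summable (fun v : Fin k → ℕ => ∏ i, ‖f (v i)‖) ∧
      ∑' v : Fin k → ℕ, ∏ i, ‖f (v i)‖ = (∑' n, ‖f n‖) ^ k := by
  induction k with
  | zero =>
      have h : HasSum (fun v : Fin 0 → ℕ => ∏ i, ‖f (v i)‖) 1 := by
        have := hasSum_single (f := fun v : Fin 0 → ℕ => ∏ i, ‖f (v i)‖)
          (default : Fin 0 → ℕ) (by
            intro b hb
            exact absurd (Subsingleton.elim b default) hb)
        simpa using this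
      exact ⟨h.summable, by rw [h.tsum_eq, pow_zero]⟩
  | succ k ih =>
      obtain ⟨ihs, ihe⟩ := ih
      set e : ℕ × (Fin k → ℕ) ≃ (Fin (k + 1) → ℕ) :=
        Fin.consEquiv (fun _ => ℕ) with he
      have hcomp : ∀ p : ℕ × (Fin k → ℕ),
          (∏ i, ‖f ((e p) i)‖) = ‖f p.1‖ * ∏ i, ‖f (p.2 i)‖ := by
        intro p
        rw [Fin.prod_univ_succ]
        simp [he, Fin.consEquiv]
      have hsum : Summable (fun p : ℕ × (Fin k → ℕ) => ‖f p.1‖ * ∏ i, ‖f (p.2 i)‖) :=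
        Summable.mul_of_nonneg (f := fun n => ‖f n‖)
          (g := fun v : Fin k → ℕ => ∏ i, ‖f (v i)‖) hf ihs
          (fun _ => norm_nonneg _) (fun _ => Finset.prod_nonneg fun _ _ => norm_nonneg _)
      have hs2 : Summable (fun v : Fin (k + 1) → ℕ => ∏ i, ‖f (v i)‖) := by
        rw [← e.summable_iff]
        exact hsum.congr fun p => (hcomp p).symm
      refine ⟨hs2, ?_⟩
      have := e.tsum_eq (fun v : Fin (k + 1) → ℕ => ∏ i, ‖f (v i)‖)
      rw [← this]
      calc ∑' p : ℕ × (Fin k → ℕ), ∏ i, ‖f ((e p) i)‖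
          = ∑' p : ℕ × (Fin k → ℕ), ‖f p.1‖ * ∏ i, ‖f (p.2 i)‖ := tsum_congr hcomp
        _ = (∑' n, ‖f n‖) * ∑' v : Fin k → ℕ, ∏ i, ‖f (v i)‖ :=
            (Summable.tsum_mul_tsum hf ihs hsum).symm
        _ = (∑' n, ‖f n‖) ^ (k + 1) := by rw [ihe, pow_succ]; ring

/-- Sum of products over tuples, complex version. -/
lemma aux_tuple (hf : Summable fun n => ‖f n‖) (k : ℕ) :
    Summable (fun v : Fin k → ℕ => ∏ i, f (v i)) ∧
      ∑' v : Fin k → ℕ, ∏ i, f (v i) = (∑' n, f n) ^ k := by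
  induction k with
  | zero =>
      have h : HasSum (fun v : Fin 0 → ℕ => ∏ i, f (v i)) 1 := by
        have := hasSum_single (f := fun v : Fin 0 → ℕ => ∏ i, f (v i))
          (default : Fin 0 → ℕ) (by
            intro b hb
            exact absurd (Subsingleton.elim b default) hb)
        simpa using this
      exact ⟨h.summable, by rw [h.tsum_eq, pow_zero]⟩
  | succ k ih =>
      obtain ⟨ihs, ihe⟩ := ih
      have ihnorm : Summable (fun v : Fin k → ℕ => ‖∏ i, f (v i)‖) := by
        refine ((aux_tuple_norm f hf k).1).congr fun v => ?_
        rw [norm_prod]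
      set e : ℕ × (Fin k → ℕ) ≃ (Fin (k + 1) → ℕ) :=
        Fin.consEquiv (fun _ => ℕ) with he
      have hcomp : ∀ p : ℕ × (Fin k → ℕ),
          (∏ i, f ((e p) i)) = f p.1 * ∏ i, f (p.2 i) := by
        intro p
        rw [Fin.prod_univ_succ]
        simp [he, Fin.consEquiv]
      have hsum : Summable (fun p : ℕ × (Fin k → ℕ) => f p.1 * ∏ i, f (p.2 i)) :=
        summable_mul_of_summable_norm (f := f) (g := fun v : Fin k → ℕ => ∏ i, f (v i))
          hf ihnorm
      have hs2 : Summable (fun v : Fin (k + 1) → ℕ => ∏ i, f (v i)) := by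
        rw [← e.summable_iff]
        exact hsum.congr fun p => (hcomp p).symm
      refine ⟨hs2, ?_⟩
      have := e.tsum_eq (fun v : Fin (k + 1) → ℕ => ∏ i, f (v i))
      rw [← this]
      calc ∑' p : ℕ × (Fin k → ℕ), ∏ i, f ((e p) i)
          = ∑' p : ℕ × (Fin k → ℕ), f p.1 * ∏ i, f (p.2 i) := tsum_congr hcomp
        _ = (∑' n, f n) * ∑' v : Fin k → ℕ, ∏ i, f (v i) :=
            (tsum_mul_tsum_of_summable_norm hf ihnorm).symm
        _ = (∑' n, f n) ^ (k + 1) := by rw [ihe, pow_succ]; ring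

/-- Geometric series over lists. -/
lemma aux_list (hf : Summable fun n => ‖f n‖) (hr : (∑' n, ‖f n‖) < 1) :
    Summable (fun l : List ℕ => (l.map f).prod) ∧
      ∑' l : List ℕ, (l.map f).prod = (1 - ∑' n, f n)⁻¹ := by
  set r : ℝ := ∑' n, ‖f n‖ with hrdef
  have hr0 : 0 ≤ r := tsum_nonneg fun n => norm_nonneg _
  set e : List ℕ ≃ Σ n, Fin n → ℕ := List.equivSigmaTuple with hedef
  have hcomp : ∀ p : Σ n, Fin n → ℕ,
      ((e.symm p).map f).prod = ∏ i, f (p.2 i) := by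
    rintro ⟨k, v⟩
    show ((List.ofFn v).map f).prod = _
    rw [List.map_ofFn, List.prod_ofFn]
    rfl
  -- summability of the sigma family
  have hnorm : Summable (fun p : Σ n, Fin n → ℕ => ∏ i, ‖f (p.2 i)‖) := by
    apply (summable_sigma_of_nonneg
      (fun p => Finset.prod_nonneg fun i _ => norm_nonneg _)).2
    constructor
    · exact fun k => (aux_tuple_norm f hf k).1
    · refine Summable.congr (summable_geometric_of_lt_one hr0 hr) fun k => ?_
      exact ((aux_tuple_norm f hf k).2).symm
  have hsig : Summable (fun p : Σ n, Fin n → ℕ => ∏ i, f (p.2 i)) := by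
    apply Summable.of_norm
    refine hnorm.congr fun p => ?_
    rw [norm_prod]
  have hsumm : Summable (fun l : List ℕ => (l.map f).prod) := by
    rw [← e.symm.summable_iff]
    exact hsig.congr fun p => (hcomp p).symm
  refine ⟨hsumm, ?_⟩
  have hs_norm : ‖∑' n, f n‖ < 1 :=
    lt_of_le_of_lt (norm_tsum_le_tsum_norm hf) hr
  calc ∑' l : List ℕ, (l.map f).prod
      = ∑' p : Σ n, Fin n → ℕ, ((e.symm p).map f).prod :=
        (e.symm.tsum_eq fun l => (l.map f).prod).symm
    _ = ∑' p : Σ n, Fin n → ℕ, ∏ i, f (p.2 i) := tsum_congr hcomp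
    _ = ∑' k : ℕ, ∑' v : Fin k → ℕ, ∏ i, f (v i) := Summable.tsum_sigma hsig
    _ = ∑' k : ℕ, (∑' n, f n) ^ k := tsum_congr fun k => (aux_tuple f hf k).2
    _ = (1 - ∑' n, f n)⁻¹ := tsum_geometric_of_norm_lt_one hs_norm

/-- The equivalence between compositions into positive squares and lists of naturals. -/
def sqEquiv : {l : List ℕ // ∀ i ∈ l, ∃ n : ℕ, 1 ≤ n ∧ i = n ^ 2} ≃ List ℕ where
  toFun c := c.val.map fun i => i.sqrt - 1
  invFun l := ⟨l.map fun n => (n + 1) ^ 2, by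
    intro i hi
    rw [List.mem_map] at hi
    obtain ⟨n, -, rfl⟩ := hi
    exact ⟨n + 1, by omega, rfl⟩⟩
  left_inv c := by
    apply Subtype.ext
    show (c.val.map fun i => i.sqrt - 1).map (fun n => (n + 1) ^ 2) = c.val
    rw [List.map_map]
    have : ∀ i ∈ c.val, ((fun n => (n + 1) ^ 2) ∘ fun i => i.sqrt - 1) i = id i := by
      intro i hi
      obtain ⟨n, hn1, rfl⟩ := c.property i hi
      have hs : (n ^ 2).sqrt = n := Nat.sqrt_eq' n
      have h2 : n - 1 + 1 = n := by omega
      simp only [Function.comp, hs, h2, id]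
    rw [List.map_congr_left this, List.map_id]
  right_inv l := by
    show ((l.map fun n => (n + 1) ^ 2).map fun i => i.sqrt - 1) = l
    rw [List.map_map]
    have : ∀ n ∈ l, ((fun i => i.sqrt - 1) ∘ fun n => (n + 1) ^ 2) n = id n := by
      intro n _
      have hs : ((n + 1) ^ 2).sqrt = n + 1 := Nat.sqrt_eq' (n + 1)
      simp only [Function.comp, hs, id]
      omega
    rw [List.map_congr_left this, List.map_id]

lemma aux_prod_map (q : ℂ) (l : List ℕ) :
    ((l.map fun n => (-2 : ℂ) * q ^ ((n + 1) ^ 2)).prod)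
      = (-2 : ℂ) ^ l.length * q ^ ((l.map fun n => (n + 1) ^ 2).sum) := by
  induction l with
  | nil => simp
  | cons a t ih =>
      simp only [List.map_cons, List.prod_cons, List.length_cons, List.sum_cons, ih]
      rw [pow_succ, pow_add]
      ring

end Aux

/-- The reciprocal of Ramanujan's theta function `φ(q) = 1 + 2∑_{n≥1} q^{n²}` is the
sum of `(-2)^{ℓ(c)} q^{|c|}` over compositions into square parts, for `|q| < 1/3`. -/
theorem reciprocal_phi_as_composition_series (q : ℂ) (hq : ‖q‖ < 1 / 3) :
    Summable (fun c : {l : List ℕ // ∀ i ∈ l, ∃ n : ℕ, 1 ≤ n ∧ i = n ^ 2} =>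
        (-2 : ℂ) ^ c.val.length * q ^ c.val.sum) ∧
    (1 + 2 * ∑' n : ℕ, q ^ ((n + 1) ^ 2)) ≠ 0 ∧
    ∑' c : {l : List ℕ // ∀ i ∈ l, ∃ n : ℕ, 1 ≤ n ∧ i = n ^ 2},
        (-2 : ℂ) ^ c.val.length * q ^ c.val.sum
      = (1 + 2 * ∑' n : ℕ, q ^ ((n + 1) ^ 2))⁻¹ := by
  set f : ℕ → ℂ := fun n => (-2 : ℂ) * q ^ ((n + 1) ^ 2) with hfdef
  set a : ℝ := ‖q‖ with hadef
  have ha : a < 1 / 3 := hq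
  have ha0 : 0 ≤ a := norm_nonneg q
  have ha1 : a < 1 := by linarith
  -- norm bound
  have hnorm_eq : ∀ n : ℕ, ‖f n‖ = 2 * a ^ ((n + 1) ^ 2) := by
    intro n
    simp [hfdef, norm_mul, norm_pow, hadef]
  have hbound : ∀ n : ℕ, ‖f n‖ ≤ 2 * a * a ^ n := by
    intro n
    rw [hnorm_eq n]
    have h1 : a ^ ((n + 1) ^ 2) ≤ a ^ (n + 1) :=
      pow_le_pow_of_le_one ha0 ha1.le (by nlinarith)
    calc 2 * a ^ ((n + 1) ^ 2) ≤ 2 * a ^ (n + 1) := by linarith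
      _ = 2 * a * a ^ n := by rw [pow_succ]; ring
  have hmaj : Summable (fun n : ℕ => 2 * a * a ^ n) :=
    (summable_geometric_of_lt_one ha0 ha1).mul_left _
  have hf : Summable fun n => ‖f n‖ :=
    Summable.of_nonneg_of_le (fun n => norm_nonneg _) hbound hmaj
  have hr : (∑' n, ‖f n‖) < 1 := by
    have h1 : (∑' n, ‖f n‖) ≤ ∑' n : ℕ, 2 * a * a ^ n := Summable.tsum_le_tsum hbound hf hmaj
    have h2 : (∑' n : ℕ, 2 * a * a ^ n) = 2 * a * (1 - a)⁻¹ := by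
      rw [tsum_mul_left, tsum_geometric_of_lt_one ha0 ha1]
    have h3 : 2 * a * (1 - a)⁻¹ < 1 := by
      rw [← div_eq_mul_inv, div_lt_one (by linarith)]
      linarith
    linarith
  obtain ⟨hsumL, htsumL⟩ := aux_list f hf hr
  -- transfer along sqEquiv
  have hcomp : ∀ c : {l : List ℕ // ∀ i ∈ l, ∃ n : ℕ, 1 ≤ n ∧ i = n ^ 2},
      ((sqEquiv c).map f).prod = (-2 : ℂ) ^ c.val.length * q ^ c.val.sum := by
    intro c
    have hc : ((sqEquiv c).map fun n => (n + 1) ^ 2) = c.val :=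
      congrArg Subtype.val (sqEquiv.left_inv c)
    rw [aux_prod_map q (sqEquiv c), hc]
    have hlen : (sqEquiv c).length = c.val.length := by
      rw [← hc, List.length_map]
    rw [hlen]
  have hS : Summable (fun c : {l : List ℕ // ∀ i ∈ l, ∃ n : ℕ, 1 ≤ n ∧ i = n ^ 2} =>
      (-2 : ℂ) ^ c.val.length * q ^ c.val.sum) := by
    have := (sqEquiv.summable_iff (f := fun l : List ℕ => (l.map f).prod)).2 hsumL
    exact this.congr hcomp
  -- identify 1 - ∑ f with 1 + 2 ∑ q^{(n+1)^2}
  have hfs : (∑' n, f n) = -2 * ∑' n : ℕ, q ^ ((n + 1) ^ 2) := by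
    rw [hfdef, tsum_mul_left]
  have hkey : (1 - ∑' n, f n) = 1 + 2 * ∑' n : ℕ, q ^ ((n + 1) ^ 2) := by
    rw [hfs]; ring
  have hne : (1 + 2 * ∑' n : ℕ, q ^ ((n + 1) ^ 2)) ≠ 0 := by
    rw [← hkey]
    have : ‖∑' n, f n‖ < 1 := lt_of_le_of_lt (norm_tsum_le_tsum_norm hf) hr
    intro h
    rw [sub_eq_zero] at h
    rw [← h] at this
    simp at this
  refine ⟨hS, hne, ?_⟩
  calc ∑' c : {l : List ℕ // ∀ i ∈ l, ∃ n : ℕ, 1 ≤ n ∧ i = n ^ 2},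
        (-2 : ℂ) ^ c.val.length * q ^ c.val.sum
      = ∑' c : {l : List ℕ // ∀ i ∈ l, ∃ n : ℕ, 1 ≤ n ∧ i = n ^ 2},
          ((sqEquiv c).map f).prod := tsum_congr fun c => (hcomp c).symm
    _ = ∑' l : List ℕ, (l.map f).prod := sqEquiv.tsum_eq fun l => (l.map f).prod
    _ = (1 - ∑' n, f n)⁻¹ := htsumL
    _ = (1 + 2 * ∑' n : ℕ, q ^ ((n + 1) ^ 2))⁻¹ := by rw [hkey]
end

section
/- Let s ∈ ℂ be such that ∑_{n≥2} n^{−Re(s)} < 1. Then the family (N(c)^{−s}) indexed by compositions c all of whose parts are ≥ 2 is summable, 2 − ζ(s) ≠ 0, and ∑_{c∈C_{ℕ*}} N(c)^{−s} = 1/(2 − ζ(s)), where ζ is the Riemann zeta function. -/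
open Complex

lemma real_prod_fin {ι : Type*} (h : ι → ℝ) (hh : Summable h) (hpos : ∀ i, 0 ≤ h i) :
    ∀ n : ℕ, Summable (fun x : Fin n → ι => ∏ i, h (x i)) ∧
      ∑' x : Fin n → ι, ∏ i, h (x i) = (∑' i, h i) ^ n := by
  intro n
  induction n with
  | zero =>
    constructor
    · exact Summable.of_finite
    · simp [tsum_fintype]
  | succ n ih =>
    have habs : Summable (fun i => ‖h i‖) := by
      simpa [Real.norm_eq_abs, _root_.abs_of_nonneg (hpos _)] using hh
    have habs2 : Summable (fun x : Fin n → ι => ‖∏ i, h (x i)‖) := by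
      have hx : ∀ x : Fin n → ι, ‖∏ i, h (x i)‖ = ∏ i, h (x i) := fun x =>
        Real.norm_of_nonneg (Finset.prod_nonneg fun i _ => hpos _)
      simpa [hx] using ih.1
    have hcomp : ∀ p : ι × (Fin n → ι),
        (∏ i, h ((Fin.consEquiv (fun _ => ι)) p i)) = h p.1 * ∏ i, h (p.2 i) := by
      intro p
      simp [Fin.prod_univ_succ]
    have hsummul : Summable (fun p : ι × (Fin n → ι) => h p.1 * ∏ i, h (p.2 i)) :=
      Summable.mul_of_nonneg (f := h) (g := fun x : Fin n → ι => ∏ i, h (x i)) hh ih.1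
        (fun i => hpos i) (fun x => Finset.prod_nonneg fun i _ => hpos _)
    constructor
    · rw [← (Fin.consEquiv (fun _ => ι)).summable_iff]
      exact Summable.congr hsummul fun p => (hcomp p).symm
    · rw [← (Fin.consEquiv (fun _ => ι)).tsum_eq]
      calc ∑' p : ι × (Fin n → ι), ∏ i, h ((Fin.consEquiv (fun _ => ι)) p i)
          = ∑' p : ι × (Fin n → ι), h p.1 * ∏ i, h (p.2 i) := tsum_congr hcomp
        _ = (∑' i, h i) * ∑' x : Fin n → ι, ∏ i, h (x i) :=
            (tsum_mul_tsum_of_summable_norm habs habs2).symm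
        _ = (∑' i, h i) ^ (n + 1) := by rw [ih.2, pow_succ]; ring

lemma cplx_prod_fin {ι : Type*} (f : ι → ℂ) (hf : Summable fun i => ‖f i‖) :
    ∀ n : ℕ, Summable (fun x : Fin n → ι => ∏ i, f (x i)) ∧
      ∑' x : Fin n → ι, ∏ i, f (x i) = (∑' i, f i) ^ n := by
  have hnorm : ∀ n : ℕ, Summable (fun x : Fin n → ι => ‖∏ i, f (x i)‖) := by
    intro n
    have := (real_prod_fin (fun i => ‖f i‖) hf (fun i => norm_nonneg _) n).1
    simpa [norm_prod] using this
  intro n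
  induction n with
  | zero =>
    constructor
    · exact Summable.of_finite
    · simp [tsum_fintype]
  | succ n ih =>
    have hcomp : ∀ p : ι × (Fin n → ι),
        (∏ i, f ((Fin.consEquiv (fun _ => ι)) p i)) = f p.1 * ∏ i, f (p.2 i) := by
      intro p
      simp [Fin.prod_univ_succ]
    constructor
    · exact Summable.of_norm (hnorm (n + 1))
    · rw [← (Fin.consEquiv (fun _ => ι)).tsum_eq]
      calc ∑' p : ι × (Fin n → ι), ∏ i, f ((Fin.consEquiv (fun _ => ι)) p i)
          = ∑' p : ι × (Fin n → ι), f p.1 * ∏ i, f (p.2 i) := tsum_congr hcomp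
        _ = (∑' i, f i) * ∑' x : Fin n → ι, ∏ i, f (x i) :=
            (tsum_mul_tsum_of_summable_norm hf (hnorm n)).symm
        _ = (∑' i, f i) ^ (n + 1) := by rw [ih.2, pow_succ]; ring

lemma cplx_sigma_list {ι : Type*} (f : ι → ℂ) (hf : Summable fun i => ‖f i‖)
    (hr : ∑' i, ‖f i‖ < 1) :
    Summable (fun p : Σ n, Fin n → ι => ∏ i, f (p.2 i)) ∧
      ∑' p : Σ n, Fin n → ι, ∏ i, f (p.2 i) = (1 - ∑' i, f i)⁻¹ := by
  have hr0 : (0:ℝ) ≤ ∑' i, ‖f i‖ := tsum_nonneg fun i => norm_nonneg _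
  have hT : ‖∑' i, f i‖ < 1 := lt_of_le_of_lt (norm_tsum_le_tsum_norm hf) hr
  have hnormfib : ∀ n : ℕ, Summable (fun x : Fin n → ι => ‖∏ i, f (x i)‖) := by
    intro n
    have := (real_prod_fin (fun i => ‖f i‖) hf (fun i => norm_nonneg _) n).1
    simpa [norm_prod] using this
  have hnormeq : ∀ n : ℕ, ∑' x : Fin n → ι, ‖∏ i, f (x i)‖ = (∑' i, ‖f i‖) ^ n := by
    intro n
    have := (real_prod_fin (fun i => ‖f i‖) hf (fun i => norm_nonneg _) n).2
    simpa [norm_prod] using this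
  have hsig : Summable (fun p : Σ n, Fin n → ι => ‖∏ i, f (p.2 i)‖) := by
    rw [summable_sigma_of_nonneg (fun p => norm_nonneg _)]
    refine ⟨hnormfib, ?_⟩
    have heq : (fun n : ℕ => ∑' x : Fin n → ι, ‖∏ i, f (x i)‖)
        = fun n : ℕ => (∑' i, ‖f i‖) ^ n := funext hnormeq
    rw [heq]
    exact summable_geometric_of_lt_one hr0 hr
  refine ⟨Summable.of_norm hsig, ?_⟩
  rw [Summable.tsum_sigma (Summable.of_norm hsig)]
  calc ∑' n : ℕ, ∑' x : Fin n → ι, ∏ i, f (x i)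
      = ∑' n : ℕ, (∑' i, f i) ^ n := tsum_congr fun n => (cplx_prod_fin f hf n).2
    _ = (1 - ∑' i, f i)⁻¹ := tsum_geometric_of_norm_lt_one hT

lemma natListProd_cpow (w : ℂ) :
    ∀ l : List ℕ, ((l.prod : ℕ) : ℂ) ^ w = (l.map (fun n : ℕ => ((n : ℕ) : ℂ) ^ w)).prod
  | [] => by simp
  | a :: t => by
    rw [show ((a :: t).prod : ℕ) = a * t.prod from List.prod_cons, Nat.cast_mul,
      Complex.natCast_mul_natCast_cpow, List.map_cons, List.prod_cons, natListProd_cpow w t]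

def listSubtypeEquiv : List {n : ℕ // 2 ≤ n} ≃ {l : List ℕ // ∀ i ∈ l, 2 ≤ i} where
  toFun l := ⟨l.map Subtype.val, by
    intro i hi
    obtain ⟨a, _, rfl⟩ := List.mem_map.mp hi
    exact a.2⟩
  invFun c := c.val.pmap (fun n h => (⟨n, h⟩ : {n : ℕ // 2 ≤ n})) c.prop
  left_inv l := by
    induction l with
    | nil => simp
    | cons a t ih => simp_all
  right_inv c := by
    apply Subtype.ext
    simp [List.map_pmap]

/-- **Composition zeta function and the Riemann zeta function.** For `s ∈ ℂ` with
`∑_{n≥2} n^{-Re s} < 1`, the family `N(c)^{-s}` over compositions with all parts `≥ 2`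
is summable, `2 - ζ(s) ≠ 0`, and `∑_{c∈C_{ℕ*}} N(c)^{-s} = 1/(2 - ζ(s))`. -/
theorem composition_zeta_no_ones (s : ℂ)
    (hsum : Summable (fun n : {n : ℕ // 2 ≤ n} => ((n : ℕ) : ℝ) ^ (-s.re)))
    (hlt : ∑' n : {n : ℕ // 2 ≤ n}, ((n : ℕ) : ℝ) ^ (-s.re) < 1) :
    Summable (fun c : {l : List ℕ // ∀ i ∈ l, 2 ≤ i} =>
        ((c.val.prod : ℕ) : ℂ) ^ (-s)) ∧
    2 - riemannZeta s ≠ 0 ∧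
    ∑' c : {l : List ℕ // ∀ i ∈ l, 2 ≤ i}, ((c.val.prod : ℕ) : ℂ) ^ (-s)
      = (2 - riemannZeta s)⁻¹ := by
  have hnormg : ∀ i : {n : ℕ // 2 ≤ n},
      ‖((i : ℕ) : ℂ) ^ (-s)‖ = ((i : ℕ) : ℝ) ^ (-s.re) := by
    intro i
    rw [Complex.norm_natCast_cpow_of_pos (by have := i.2; omega)]
    simp
  have hgn : Summable (fun i : {n : ℕ // 2 ≤ n} => ‖((i : ℕ) : ℂ) ^ (-s)‖) :=
    Summable.congr hsum fun i => (hnormg i).symm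
  have hr : ∑' i : {n : ℕ // 2 ≤ n}, ‖((i : ℕ) : ℂ) ^ (-s)‖ < 1 := by
    rw [tsum_congr hnormg]; exact hlt
  have hre : 1 < s.re := by
    have hj : Function.Injective
        (fun k : ℕ => (⟨k + 2, by omega⟩ : {n : ℕ // 2 ≤ n})) := by
      intro a b hab
      simpa [Subtype.ext_iff] using hab
    have h2 : Summable (fun k : ℕ => ((k + 2 : ℕ) : ℝ) ^ (-s.re)) := by
      have := hsum.comp_injective hj
      exact this
    have h3 : Summable (fun n : ℕ => (n : ℝ) ^ (-s.re)) := (summable_nat_add_iff 2).mp h2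
    have := Real.summable_nat_rpow.mp h3
    linarith
  have hs0 : s ≠ 0 := by
    intro h; rw [h] at hre; simp only [Complex.zero_re] at hre; linarith
  have hTnorm : ‖∑' i : {n : ℕ // 2 ≤ n}, ((i : ℕ) : ℂ) ^ (-s)‖ < 1 :=
    lt_of_le_of_lt (norm_tsum_le_tsum_norm hgn) hr
  have hgsum : Summable (fun i : {n : ℕ // 2 ≤ n} => ((i : ℕ) : ℂ) ^ (-s)) :=
    Summable.of_norm hgn
  let e2 : ℕ ≃ {n : ℕ // 2 ≤ n} :=
    { toFun := fun k => ⟨k + 2, by omega⟩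
      invFun := fun i => (i : ℕ) - 2
      left_inv := fun k => by simp
      right_inv := fun i => by
        apply Subtype.ext; have := i.2; simp; omega }
  have hfN2 : Summable (fun k : ℕ => (((k + 2 : ℕ)) : ℂ) ^ (-s)) := by
    have := hgsum.comp_injective e2.injective
    exact this
  have hfN : Summable (fun n : ℕ => ((n : ℕ) : ℂ) ^ (-s)) :=
    (summable_nat_add_iff 2).mp hfN2
  have htail : ∑' n : ℕ, (((n + 2 : ℕ)) : ℂ) ^ (-s)
      = ∑' i : {n : ℕ // 2 ≤ n}, ((i : ℕ) : ℂ) ^ (-s) := by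
    have := e2.tsum_eq (fun i : {n : ℕ // 2 ≤ n} => ((i : ℕ) : ℂ) ^ (-s))
    exact this
  have hzeta : riemannZeta s
      = 1 + ∑' i : {n : ℕ // 2 ≤ n}, ((i : ℕ) : ℂ) ^ (-s) := by
    rw [zeta_eq_tsum_one_div_nat_cpow hre]
    have hconv : ∀ n : ℕ, 1 / (n : ℂ) ^ s = ((n : ℕ) : ℂ) ^ (-s) := by
      intro n; rw [Complex.cpow_neg, one_div]
    rw [tsum_congr hconv]
    have hfN1 : Summable (fun n : ℕ => (((n + 1 : ℕ)) : ℂ) ^ (-s)) :=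
      (summable_nat_add_iff 1).mpr hfN
    rw [Summable.tsum_eq_zero_add hfN, Summable.tsum_eq_zero_add hfN1]
    have h0 : ((0 : ℕ) : ℂ) ^ (-s) = 0 := by
      rw [Nat.cast_zero, Complex.zero_cpow (neg_ne_zero.mpr hs0)]
    have h1 : (((0 + 1 : ℕ)) : ℂ) ^ (-s) = 1 := by norm_num
    have h2 : ∑' n : ℕ, (((n + 1 + 1 : ℕ)) : ℂ) ^ (-s)
        = ∑' i : {n : ℕ // 2 ≤ n}, ((i : ℕ) : ℂ) ^ (-s) := by
      rw [← htail]
    rw [h0, h1, h2, zero_add]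
  have h2z : 2 - riemannZeta s
      = 1 - ∑' i : {n : ℕ // 2 ≤ n}, ((i : ℕ) : ℂ) ^ (-s) := by rw [hzeta]; ring
  have hne : 1 - ∑' i : {n : ℕ // 2 ≤ n}, ((i : ℕ) : ℂ) ^ (-s) ≠ 0 := by
    intro h
    have hT1 : ∑' i : {n : ℕ // 2 ≤ n}, ((i : ℕ) : ℂ) ^ (-s) = 1 := by
      linear_combination -h
    rw [hT1] at hTnorm
    simp at hTnorm
  obtain ⟨hsumsig, htsumsig⟩ := cplx_sigma_list
    (fun i : {n : ℕ // 2 ≤ n} => ((i : ℕ) : ℂ) ^ (-s)) hgn hr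
  let E : (Σ n, Fin n → {n : ℕ // 2 ≤ n}) ≃ {l : List ℕ // ∀ i ∈ l, 2 ≤ i} :=
    List.equivSigmaTuple.symm.trans listSubtypeEquiv
  have hFE : ∀ p : Σ n, Fin n → {n : ℕ // 2 ≤ n},
      ((((E p).val.prod : ℕ)) : ℂ) ^ (-s) = ∏ i, (((p.2 i : ℕ)) : ℂ) ^ (-s) := by
    rintro ⟨n, x⟩
    have hEv : (E ⟨n, x⟩).val = (List.ofFn x).map Subtype.val := rfl
    rw [hEv, natListProd_cpow, List.map_map, List.map_ofFn, List.prod_ofFn]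
    rfl
  refine ⟨?_, ?_, ?_⟩
  · rw [← E.summable_iff]
    exact Summable.congr hsumsig fun p => (hFE p).symm
  · rw [h2z]; exact hne
  · rw [h2z, ← E.tsum_eq]
    calc ∑' p : Σ n, Fin n → {n : ℕ // 2 ≤ n}, (((((E p).val.prod : ℕ)) : ℂ) ^ (-s))
        = ∑' p : Σ n, Fin n → {n : ℕ // 2 ≤ n}, ∏ i, (((p.2 i : ℕ)) : ℂ) ^ (-s) :=
          tsum_congr hFE
      _ = (1 - ∑' i : {n : ℕ // 2 ≤ n}, ((i : ℕ) : ℂ) ^ (-s))⁻¹ := htsumsig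
end

section
/- Let T* be a set of integers ≥ 2 and let s, z ∈ ℂ be such that |z| · ∑_{n∈T*} n^{−Re(s)} < 1 (with the series convergent). Then the family (z^{ℓ(c)} N(c)^{−s}) indexed by compositions c ∈ C_{T*} is summable, 1 − z·∑_{n∈T*} n^{−s} ≠ 0, and ∑_{c∈C_{T*}} z^{ℓ(c)} N(c)^{−s} = 1/(1 − z·∑_{n∈T*} n^{−s}). -/
/-- Lists with all elements in `T` are equivalent to lists of elements of `T`. -/
def CDS.listEquiv (T : Set ℕ) : {l : List ℕ // ∀ i ∈ l, i ∈ T} ≃ List T where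
  toFun c := c.1.pmap (fun a h => (⟨a, h⟩ : T)) c.2
  invFun L := ⟨L.map Subtype.val, fun i hi => by
    obtain ⟨x, hx, rfl⟩ := List.mem_map.1 hi; exact x.2⟩
  left_inv c := Subtype.ext (by
    simp [List.map_pmap, List.pmap_eq_map])
  right_inv L := by
    induction L with
    | nil => rfl
    | cons a l ih => simpa using ih

lemma CDS.map_prod (s z : ℂ) : ∀ (l : List ℕ), (∀ i ∈ l, i ≠ 0) →
    (l.map fun n : ℕ => z * ((n : ℕ) : ℂ) ^ (-s)).prod
      = z ^ l.length * ((l.prod : ℕ) : ℂ) ^ (-s) := by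
  intro l
  induction l with
  | nil => simp
  | cons a l ih =>
    intro h
    have ha : a ≠ 0 := h a List.mem_cons_self
    have hl : ∀ i ∈ l, i ≠ 0 := fun i hi => h i (List.mem_cons_of_mem a hi)
    have hprod : ((a * l.prod : ℕ) : ℂ) ^ (-s)
        = ((a : ℕ) : ℂ) ^ (-s) * ((l.prod : ℕ) : ℂ) ^ (-s) := by
      have h := Complex.mul_cpow_ofReal_nonneg (a := (a : ℝ)) (b := ((l.prod : ℕ) : ℝ))
        (by positivity) (by positivity) (-s)
      have h2 : ((a : ℕ) : ℂ) = (((a : ℕ) : ℝ) : ℂ) := (Complex.ofReal_natCast a).symm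
      have h3 : ((l.prod : ℕ) : ℂ) = (((l.prod : ℕ) : ℝ) : ℂ) :=
        (Complex.ofReal_natCast l.prod).symm
      rw [Nat.cast_mul, h2, h3]
      exact h
    simp only [List.map_cons, List.prod_cons, List.length_cons, List.prod_cons, hprod,
      ih hl]
    ring

set_option maxHeartbeats 1000000 in
lemma CDS.tuple_lemma {ι : Type*} (f : ι → ℂ) (hf : Summable fun i => ‖f i‖) :
    ∀ n : ℕ, (Summable fun v : Fin n → ι => ‖∏ i, f (v i)‖) ∧
      (∑' v : Fin n → ι, ‖∏ i, f (v i)‖) = (∑' i, ‖f i‖) ^ n ∧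
      (∑' v : Fin n → ι, ∏ i, f (v i)) = (∑' i, f i) ^ n := by
  intro n
  induction n with
  | zero =>
    have h1 : HasSum (fun v : Fin 0 → ι => ‖∏ i, f (v i)‖) 1 := by
      have := hasSum_single (f := fun v : Fin 0 → ι => ‖∏ i, f (v i)‖)
        (default : Fin 0 → ι) (fun b hb => absurd (Subsingleton.elim b default) hb)
      simpa using this
    have h2 : HasSum (fun v : Fin 0 → ι => ∏ i, f (v i)) 1 := by
      have := hasSum_single (f := fun v : Fin 0 → ι => ∏ i, f (v i))
        (default : Fin 0 → ι) (fun b hb => absurd (Subsingleton.elim b default) hb)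
      simpa using this
    exact ⟨h1.summable, by simpa using h1.tsum_eq, by simpa using h2.tsum_eq⟩
  | succ n ih =>
    set e := Fin.consEquiv (fun _ : Fin (n + 1) => ι) with he
    have hcomp : ∀ p : ι × (Fin n → ι),
        (∏ i, f (e p i)) = f p.1 * ∏ i, f (p.2 i) := by
      intro p
      simp [he, Fin.consEquiv, Fin.prod_univ_succ]
    -- norm summability over the product type
    have hSn : Summable (fun p : ι × (Fin n → ι) => ‖f p.1‖ * ‖∏ i, f (p.2 i)‖) :=
      Summable.mul_of_nonneg (f := fun i => ‖f i‖)
        (g := fun v : Fin n → ι => ‖∏ i, f (v i)‖)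
        hf ih.1 (fun _ => norm_nonneg _) (fun _ => norm_nonneg _)
    have hSc : Summable (fun p : ι × (Fin n → ι) => f p.1 * ∏ i, f (p.2 i)) :=
      (Summable.mul_norm (f := f) (g := fun v : Fin n → ι => ∏ i, f (v i)) hf ih.1).of_norm
    have hsum1 : Summable (fun v : Fin (n + 1) → ι => ‖∏ i, f (v i)‖) := by
      rw [← e.summable_iff]
      exact hSn.congr (fun p => by rw [Function.comp_apply, hcomp p, norm_mul])
    have ht1 : (∑' v : Fin (n + 1) → ι, ‖∏ i, f (v i)‖) = (∑' i, ‖f i‖) ^ (n + 1) := by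
      rw [← e.tsum_eq]
      calc (∑' p : ι × (Fin n → ι), ‖∏ i, f (e p i)‖)
          = ∑' p : ι × (Fin n → ι), ‖f p.1‖ * ‖∏ i, f (p.2 i)‖ := by
            exact tsum_congr fun p => by rw [hcomp p, norm_mul]
        _ = (∑' i, ‖f i‖) * ∑' v : Fin n → ι, ‖∏ i, f (v i)‖ :=
            (Summable.tsum_mul_tsum (f := fun i => ‖f i‖)
              (g := fun v : Fin n → ι => ‖∏ i, f (v i)‖) hf ih.1 hSn).symm
        _ = (∑' i, ‖f i‖) ^ (n + 1) := by rw [ih.2.1, pow_succ]; ring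
    have ht2 : (∑' v : Fin (n + 1) → ι, ∏ i, f (v i)) = (∑' i, f i) ^ (n + 1) := by
      rw [← e.tsum_eq]
      calc (∑' p : ι × (Fin n → ι), ∏ i, f (e p i))
          = ∑' p : ι × (Fin n → ι), f p.1 * ∏ i, f (p.2 i) := tsum_congr hcomp
        _ = (∑' i, f i) * ∑' v : Fin n → ι, ∏ i, f (v i) :=
            (Summable.tsum_mul_tsum (f := f) (g := fun v : Fin n → ι => ∏ i, f (v i))
              hf.of_norm ih.1.of_norm hSc).symm
        _ = (∑' i, f i) ^ (n + 1) := by rw [ih.2.2, pow_succ]; ring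
    exact ⟨hsum1, ht1, ht2⟩

/-- **Composition Dirichlet series with length parameter.** For `T* ⊆ {n : 2 ≤ n}` and
`s, z ∈ ℂ` with `|z| ∑_{n∈T*} n^{-Re s} < 1`, the family `z^{ℓ(c)} N(c)^{-s}` over
compositions with parts in `T*` is summable, `1 - z ∑_{n∈T*} n^{-s} ≠ 0`, and the sum
equals `1/(1 - z ∑_{n∈T*} n^{-s})`. -/
theorem composition_dirichlet_series
    (T : Set ℕ) (hT : ∀ n ∈ T, 2 ≤ n) (s z : ℂ)
    (hsum : Summable (fun n : T => ((n : ℕ) : ℝ) ^ (-s.re)))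
    (hlt : ‖z‖ * ∑' n : T, ((n : ℕ) : ℝ) ^ (-s.re) < 1) :
    Summable (fun c : {l : List ℕ // ∀ i ∈ l, i ∈ T} =>
        z ^ c.val.length * ((c.val.prod : ℕ) : ℂ) ^ (-s)) ∧
    1 - z * ∑' n : T, ((n : ℕ) : ℂ) ^ (-s) ≠ 0 ∧
    ∑' c : {l : List ℕ // ∀ i ∈ l, i ∈ T},
        z ^ c.val.length * ((c.val.prod : ℕ) : ℂ) ^ (-s)
      = (1 - z * ∑' n : T, ((n : ℕ) : ℂ) ^ (-s))⁻¹ := by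
  classical
  set f : T → ℂ := fun n => z * ((n : ℕ) : ℂ) ^ (-s) with hfdef
  have hnorm : ∀ n : T, ‖f n‖ = ‖z‖ * ((n : ℕ) : ℝ) ^ (-s.re) := by
    intro n
    have h2 : (0 : ℝ) < (n : ℕ) := by
      have := hT n n.2; positivity
    have : ‖(((n : ℕ) : ℂ)) ^ (-s)‖ = ((n : ℕ) : ℝ) ^ (-s.re) := by
      rw [show (((n : ℕ) : ℂ)) = ((((n : ℕ) : ℝ)) : ℂ) by push_cast; ring,
        Complex.norm_cpow_eq_rpow_re_of_pos h2, Complex.neg_re]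
    rw [hfdef, norm_mul, this]
  have hfnorm : Summable fun n : T => ‖f n‖ :=
    (hsum.mul_left ‖z‖).congr (fun n => (hnorm n).symm)
  set r : ℝ := ∑' n : T, ‖f n‖ with hrdef
  have hr1 : r < 1 := by
    rw [hrdef, tsum_congr hnorm, tsum_mul_left]; exact hlt
  have hr0 : 0 ≤ r := tsum_nonneg fun n => norm_nonneg _
  set w : ℂ := ∑' n : T, f n with hwdef
  have hw : w = z * ∑' n : T, ((n : ℕ) : ℂ) ^ (-s) := by
    rw [hwdef, hfdef, tsum_mul_left]
  have hwn : ‖w‖ < 1 := lt_of_le_of_lt (norm_tsum_le_tsum_norm hfnorm) hr1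
  have hne : 1 - z * ∑' n : T, ((n : ℕ) : ℂ) ^ (-s) ≠ 0 := by
    rw [← hw]
    refine sub_ne_zero.2 fun h => ?_
    rw [← h] at hwn; simp at hwn
  -- tuple lemma
  have aux := CDS.tuple_lemma f hfnorm
  set G : (Σ n : ℕ, Fin n → T) → ℂ := fun x => ∏ i, f (x.2 i) with hGdef
  have hGnorm : Summable fun x => ‖G x‖ := by
    rw [summable_sigma_of_nonneg (fun x => norm_nonneg _)]
    refine ⟨fun n => (aux n).1, ?_⟩
    refine (summable_geometric_of_lt_one hr0 hr1).congr fun n => ?_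
    exact ((aux n).2.1).symm
  have hG : Summable G := hGnorm.of_norm
  have hGt : ∑' x, G x = (1 - w)⁻¹ := by
    rw [hG.tsum_sigma]
    calc (∑' (n : ℕ) (v : Fin n → T), G ⟨n, v⟩)
        = ∑' n : ℕ, w ^ n := tsum_congr fun n => (aux n).2.2
      _ = (1 - w)⁻¹ := tsum_geometric_of_norm_lt_one hwn
  -- transfer along the equivalence
  set E := (CDS.listEquiv T).trans (List.equivSigmaTuple (α := ↥T)) with hEdef
  have key : ∀ c : {l : List ℕ // ∀ i ∈ l, i ∈ T},
      G (E c) = z ^ c.val.length * ((c.val.prod : ℕ) : ℂ) ^ (-s) := by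
    intro c
    have hLmap : ((CDS.listEquiv T) c).map f
        = c.val.map (fun n : ℕ => z * ((n : ℕ) : ℂ) ^ (-s)) := by
      simp [CDS.listEquiv, List.map_pmap, List.pmap_eq_map, hfdef]
    have hG1 : G (E c) = (((CDS.listEquiv T) c).map f).prod := by
      set L := (CDS.listEquiv T) c with hL
      have h1 : G (E c) = ∏ i : Fin L.length, f (L.get i) := rfl
      have h2 : (List.ofFn fun i => f (L.get i)) = L.map f := by
        rw [show (fun i => f (L.get i)) = f ∘ L.get from rfl, ← List.map_ofFn,
          List.ofFn_get]
      rw [h1, ← List.prod_ofFn, h2]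
    have hne0 : ∀ i ∈ c.val, i ≠ 0 := fun i hi => by
      have := hT i (c.2 i hi); omega
    rw [hG1, hLmap, CDS.map_prod s z c.val hne0]
  refine ⟨?_, hne, ?_⟩
  · have := (E.summable_iff (f := G)).2 hG
    exact this.congr key
  · calc (∑' c : {l : List ℕ // ∀ i ∈ l, i ∈ T},
        z ^ c.val.length * ((c.val.prod : ℕ) : ℂ) ^ (-s))
        = ∑' c, G (E c) := tsum_congr fun c => (key c).symm
      _ = ∑' x, G x := E.tsum_eq G
      _ = (1 - w)⁻¹ := hGt
      _ = (1 - z * ∑' n : T, ((n : ℕ) : ℂ) ^ (-s))⁻¹ := by rw [hw]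
end
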